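/- Let p ≥ 1 be an integer, τ > 0, σ₀ > 0, ε > 0, and let β ∈ ℝ^p be nonzero with ‖β‖₀ = q and with min{β_j² : β_j ≠ 0} = K for some constant K > 0. If σ² given β has the inverse-gamma distribution with shape 1 and scale ‖β‖²/(2τ²), i.e., P(σ² ≥ c | β) = ∫_c^∞ (‖β‖²/(2τ²)) · u^{−2} · exp(−‖β‖²/(2τ²u)) du for c > 0, then P(σ²/σ₀² ≥ ε | β) ≥ 1 − exp(−qK/(2ε σ₀² τ²)). -/

import Mathlib

open MeasureTheory Real Filter Set

/-- Proposition 2: the p-sigma prior induces σ²|β ~ IG(1, ‖β‖²/(2τ²)), which places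
large mass on {σ²/σ₀² ≥ ε} when the sparsity q grows. -/
theorem stmt_1 (p q : ℕ) (hp : 1 ≤ p) (τ σ₀ ε K : ℝ)
    (hτ : 0 < τ) (hσ₀ : 0 < σ₀) (hε : 0 < ε) (hK : 0 < K)
    (β : Fin p → ℝ) (hβ : β ≠ 0)
    (hq : (Finset.univ.filter fun j => β j ≠ 0).card = q)
    (hKmin : IsLeast ((fun j => (β j) ^ 2) '' {j | β j ≠ 0}) K) :
    1 - Real.exp (-((q : ℝ) * K) / (2 * ε * σ₀ ^ 2 * τ ^ 2)) ≤
      ∫ u in Set.Ioi (ε * σ₀ ^ 2),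
        (∑ j, (β j) ^ 2) / (2 * τ ^ 2) * u ^ (-2 : ℤ) *
          Real.exp (-(∑ j, (β j) ^ 2) / (2 * τ ^ 2 * u)) := by
  set S := ∑ j, (β j) ^ 2 with hSdef
  set c := ε * σ₀ ^ 2 with hcdef
  have hc : 0 < c := by positivity
  have hSqK : (q : ℝ) * K ≤ S := by
    calc (q : ℝ) * K = ∑ _j ∈ Finset.univ.filter (fun j => β j ≠ 0), K := by
          rw [Finset.sum_const, hq, nsmul_eq_mul]
      _ ≤ ∑ j ∈ Finset.univ.filter (fun j => β j ≠ 0), (β j) ^ 2 :=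
          Finset.sum_le_sum fun j hj =>
            hKmin.2 ⟨j, (Finset.mem_filter.mp hj).2, rfl⟩
      _ ≤ S := Finset.sum_le_sum_of_subset_of_nonneg (Finset.filter_subset _ _)
          (fun j _ _ => sq_nonneg _)
  have hSpos : 0 < S := by
    obtain ⟨j, hj⟩ := Function.ne_iff.mp hβ
    have hj' : β j ≠ 0 := by simpa using hj
    exact Finset.sum_pos' (fun i _ => sq_nonneg _)
      ⟨j, Finset.mem_univ j, by positivity⟩
  have hτ2 : (0:ℝ) < 2 * τ ^ 2 := by positivity
  -- derivative
  have key : ∀ u ∈ Set.Ici c, HasDerivAt (fun u => Real.exp (-S / (2 * τ ^ 2 * u)))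
      (S / (2 * τ ^ 2) * u ^ (-2 : ℤ) * Real.exp (-S / (2 * τ ^ 2 * u))) u := by
    intro u hu
    have hu0 : u ≠ 0 := ne_of_gt (lt_of_lt_of_le hc hu)
    have h1 : HasDerivAt (fun u : ℝ => -S / (2 * τ ^ 2 * u))
        (S / (2 * τ ^ 2) * u ^ (-2 : ℤ)) u := by
      have h2 := (hasDerivAt_inv hu0).const_mul (-S / (2 * τ ^ 2))
      have heq : (fun u : ℝ => -S / (2 * τ ^ 2 * u))
          = fun u : ℝ => -S / (2 * τ ^ 2) * u⁻¹ := by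
        funext v; rw [← div_div, div_eq_mul_inv]
      rw [heq]
      refine h2.congr_deriv ?_
      simp only [zpow_neg]
      rw [show ((2:ℤ) : ℤ) = ((2:ℕ) : ℤ) from rfl, zpow_natCast]
      field_simp
    have h3 := (Real.hasDerivAt_exp (-S / (2 * τ ^ 2 * u))).comp u h1
    refine h3.congr_deriv ?_
    ring
  have hpos : ∀ u ∈ Set.Ioi c,
      0 ≤ S / (2 * τ ^ 2) * u ^ (-2 : ℤ) * Real.exp (-S / (2 * τ ^ 2 * u)) := by
    intro u hu
    have hu0 : (0:ℝ) < u := lt_trans hc hu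
    positivity
  have htend : Tendsto (fun u => Real.exp (-S / (2 * τ ^ 2 * u))) atTop (nhds 1) := by
    have h0 : Tendsto (fun u : ℝ => -S / (2 * τ ^ 2 * u)) atTop (nhds 0) := by
      have := tendsto_inv_atTop_zero.const_mul (-S / (2 * τ ^ 2))
      simp only [mul_zero] at this
      convert this using 2 with u
      rw [← div_div, div_eq_mul_inv]
    have := (Real.continuous_exp.tendsto 0).comp h0
    simpa [Function.comp_def] using this
  have hint := integral_Ioi_of_hasDerivAt_of_nonneg' key hpos htend
  rw [hint]
  have hexp : Real.exp (-S / (2 * τ ^ 2 * c)) ≤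
      Real.exp (-((q : ℝ) * K) / (2 * ε * σ₀ ^ 2 * τ ^ 2)) := by
    apply Real.exp_le_exp.mpr
    rw [neg_div, neg_div, neg_le_neg_iff]
    have hD : 2 * ε * σ₀ ^ 2 * τ ^ 2 = 2 * τ ^ 2 * c := by rw [hcdef]; ring
    rw [hD]
    gcongr
  linarith
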